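/- Every indecomposable thin persistence module M:(ℝ,≤)²→vect_F is isomorphic to a polytope module, i.e., to the interval module F𝕀 for some interval 𝕀 of (ℝ,≤)². -/

import Mathlib

/-- A persistence module over a preorder `P` with coefficients in a field `F`:
a functor `(P,≤) → Vect_F`, given by vector spaces `V p` and linear maps
`map : i ≤ j → (V i →ₗ[F] V j)` satisfying the functoriality equations. -/
structure PersistenceModule (F : Type) [Field F] (P : Type) [Preorder P] where
  V : P → Type
  [addCommGroup : ∀ p, AddCommGroup (V p)]
  [module : ∀ p, Module F (V p)]
  map : ∀ {i j : P}, i ≤ j → (V i →ₗ[F] V j)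
  map_id : ∀ i : P, map (le_refl i) = LinearMap.id
  map_comp : ∀ {i j k : P} (hij : i ≤ j) (hjk : j ≤ k),
    (map hjk).comp (map hij) = map (hij.trans hjk)

attribute [instance] PersistenceModule.addCommGroup PersistenceModule.module

/-- A zigzag path `a - x₁ - ⋯ - xₙ - b` in a preorder, where each consecutive
pair of points is comparable. -/
inductive Zigzag (P : Type) [Preorder P] : P → P → Type
  | single (a : P) : Zigzag P a a
  | consLe {a b c : P} (h : a ≤ b) (p : Zigzag P b c) : Zigzag P a c
  | consGe {a b c : P} (h : b ≤ a) (p : Zigzag P b c) : Zigzag P a c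

/-- Convexity of a subset of a poset: `i ≤ j ≤ k` with `i, k ∈ J` implies `j ∈ J`. -/
def PosetConvex {P : Type} [Preorder P] (J : Set P) : Prop :=
  ∀ i ∈ J, ∀ k ∈ J, ∀ j : P, i ≤ j → j ≤ k → j ∈ J

/-- Connectedness: any two points of `J` are joined by a finite zigzag path inside `J`. -/
def ZigzagConnected {P : Type} [Preorder P] (J : Set P) : Prop :=
  ∀ a b : J, Nonempty (Zigzag (↥J) a b)

open Classical in
/-- The interval (polytope) module `F𝕀` on a convex subset `I`: the vector space `F`
at points of `I` (realized as the submodule `⊤ ≤ F`) and `0` (the submodule `⊥`)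
elsewhere, with identity maps for comparable pairs inside `I` and zero maps
otherwise. -/
noncomputable def intervalModule (F : Type) [Field F] {P : Type} [Preorder P]
    (I : Set P) (hconv : PosetConvex I) : PersistenceModule F P where
  V p := ↥(if p ∈ I then (⊤ : Submodule F F) else ⊥)
  addCommGroup _ := inferInstance
  module _ := inferInstance
  map {i j} _ :=
    if hij : i ∈ I ∧ j ∈ I then
      Submodule.inclusion (by simp [hij.1, hij.2])
    else 0
  map_id := by
    intro i
    try dsimp only
    by_cases hi : i ∈ I
    · rw [dif_pos (show i ∈ I ∧ i ∈ I from ⟨hi, hi⟩)]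
      ext x
      rfl
    · rw [dif_neg (show ¬(i ∈ I ∧ i ∈ I) from fun h => hi h.1)]
      have : Subsingleton ↥(if i ∈ I then (⊤ : Submodule F F) else ⊥) := by
        rw [if_neg hi]; infer_instance
      exact Subsingleton.elim _ _
  map_comp := by
    intro i j k hij hjk
    try dsimp only
    by_cases hi : i ∈ I
    · by_cases hk : k ∈ I
      · have hj : j ∈ I := hconv i hi k hk j hij hjk
        rw [dif_pos (show i ∈ I ∧ j ∈ I from ⟨hi, hj⟩),
          dif_pos (show j ∈ I ∧ k ∈ I from ⟨hj, hk⟩),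
          dif_pos (show i ∈ I ∧ k ∈ I from ⟨hi, hk⟩)]
        ext x
        rfl
      · rw [dif_neg (show ¬(j ∈ I ∧ k ∈ I) from fun h => hk h.2),
          dif_neg (show ¬(i ∈ I ∧ k ∈ I) from fun h => hk h.2)]
        have : Subsingleton ↥(if k ∈ I then (⊤ : Submodule F F) else ⊥) := by
          rw [if_neg hk]; infer_instance
        exact Subsingleton.elim _ _
    · rw [dif_neg (show ¬(i ∈ I ∧ j ∈ I) from fun h => hi h.1),
        dif_neg (show ¬(i ∈ I ∧ k ∈ I) from fun h => hi h.1)]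
      ext x
      simp

/-- A subrepresentation of a persistence module: a family of submodules closed
under the structure maps. -/
structure Subrep {F : Type} [Field F] {P : Type} [Preorder P] (M : PersistenceModule F P) where
  S : ∀ p, Submodule F (M.V p)
  stable : ∀ {i j : P} (h : i ≤ j), Submodule.map (M.map h) (S i) ≤ S j

/-- A persistence module is decomposable if it is the (internal) direct sum of two
nonzero subrepresentations. -/
def PersistenceModule.Decomposable {F : Type} [Field F] {P : Type} [Preorder P]
    (M : PersistenceModule F P) : Prop :=
  ∃ A B : Subrep M, (∃ p, A.S p ≠ ⊥) ∧ (∃ p, B.S p ≠ ⊥) ∧ ∀ p, IsCompl (A.S p) (B.S p)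

/-- Isomorphism of persistence modules: a family of linear equivalences commuting
with the structure maps. -/
def IsIsomorphic {F : Type} [Field F] {P : Type} [Preorder P]
    (M N : PersistenceModule F P) : Prop :=
  ∃ f : ∀ p, M.V p ≃ₗ[F] N.V p, ∀ (i j : P) (h : i ≤ j),
    (N.map h).comp (f i).toLinearMap = (f j).toLinearMap.comp (M.map h)

namespace Stmt14
open Function

variable {F : Type} [Field F]

/-- The support of a persistence module. -/
def Supp (M : PersistenceModule F (ℝ × ℝ)) : Set (ℝ × ℝ) := {p | ∃ v : M.V p, v ≠ 0}

variable {M : PersistenceModule F (ℝ × ℝ)}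

theorem mapc {i j k : ℝ × ℝ} (hij : i ≤ j) (hjk : j ≤ k) (v : M.V i) :
    M.map hjk (M.map hij v) = M.map (hij.trans hjk) v := by
  rw [← M.map_comp hij hjk]; rfl

theorem mapid {i : ℝ × ℝ} (h : i ≤ i) (v : M.V i) : M.map h v = v := by
  rw [show M.map h = LinearMap.id from M.map_id i]; rfl

theorem span_of_thin (hthin : ∀ i, Module.rank F (M.V i) ≤ 1) {p : ℝ × ℝ}
    {v : M.V p} (hv : v ≠ 0) (w : M.V p) : ∃ c : F, w = c • v := by
  by_contra hcon
  push_neg at hcon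
  have hli : LinearIndependent F ![v, w] := by
    rw [LinearIndependent.pair_iff]
    intro s t hst
    rcases eq_or_ne t 0 with ht | ht
    · subst ht
      simp only [zero_smul, add_zero, smul_eq_zero] at hst
      exact ⟨hst.resolve_right hv, rfl⟩
    · exfalso
      have h1 : t • w = -(s • v) := by
        rw [eq_neg_iff_add_eq_zero, add_comm]; exact hst
      exact hcon (t⁻¹ * -s) (by rw [mul_smul, neg_smul, ← h1, inv_smul_smul₀ ht])
  have h2 := hli.cardinal_le_rank
  rw [Cardinal.mk_fintype, Fintype.card_fin] at h2
  have h3 : (2 : Cardinal) ≤ 1 := le_trans (by exact_mod_cast h2) (hthin p)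
  norm_num at h3

theorem subsingleton_of_not_supp {p : ℝ × ℝ} (hp : p ∉ Supp M) : Subsingleton (M.V p) := by
  have hz : ∀ v : M.V p, v = 0 := by
    intro v; by_contra hv; exact hp ⟨v, hv⟩
  exact ⟨fun a b => by rw [hz a, hz b]⟩

theorem bij_of_ne_zero (hthin : ∀ i, Module.rank F (M.V i) ≤ 1) {i j : ℝ × ℝ} (h : i ≤ j)
    {v : M.V i} (hv : v ≠ 0) (hmv : M.map h v ≠ 0) : Bijective (M.map h) := by
  constructor
  · rw [injective_iff_map_eq_zero]
    intro u hu
    obtain ⟨c, rfl⟩ := span_of_thin hthin hv u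
    rw [map_smul, smul_eq_zero] at hu
    rcases hu with hc | hc
    · rw [hc, zero_smul]
    · exact absurd hc hmv
  · intro w
    obtain ⟨c, rfl⟩ := span_of_thin hthin hmv w
    exact ⟨c • v, by rw [map_smul]⟩

theorem bij_trans {i j k : ℝ × ℝ} (hij : i ≤ j) (hjk : j ≤ k)
    (b1 : Bijective (M.map hij)) (b2 : Bijective (M.map hjk)) :
    Bijective (M.map (hij.trans hjk)) := by
  have : ⇑(M.map (hij.trans hjk)) = ⇑(M.map hjk) ∘ ⇑(M.map hij) := by
    funext v; exact (mapc hij hjk v).symm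
  rw [this]; exact b2.comp b1

theorem bij_left {i j k : ℝ × ℝ} (hij : i ≤ j) (hjk : j ≤ k)
    (bik : Bijective (M.map (hij.trans hjk))) (bjk : Bijective (M.map hjk)) :
    Bijective (M.map hij) := by
  constructor
  · intro a b hab
    apply bik.1
    rw [← mapc hij hjk, ← mapc hij hjk, hab]
  · intro w
    obtain ⟨a, ha⟩ := bik.2 (M.map hjk w)
    exact ⟨a, bjk.1 (by rw [mapc hij hjk, ha])⟩

theorem bij_right {i j k : ℝ × ℝ} (hij : i ≤ j) (hjk : j ≤ k)
    (bij : Bijective (M.map hij)) (bik : Bijective (M.map (hij.trans hjk))) :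
    Bijective (M.map hjk) := by
  constructor
  · intro u u' huu
    obtain ⟨a, rfl⟩ := bij.2 u
    obtain ⟨a', rfl⟩ := bij.2 u'
    rw [mapc hij hjk, mapc hij hjk] at huu
    rw [bik.1 huu]
  · intro w
    obtain ⟨a, ha⟩ := bik.2 w
    exact ⟨M.map hij a, by rw [mapc hij hjk, ha]⟩

theorem supp_of_bij_src {i j : ℝ × ℝ} (h : i ≤ j) (b : Bijective (M.map h))
    (hi : i ∈ Supp M) : j ∈ Supp M := by
  obtain ⟨v, hv⟩ := hi
  exact ⟨M.map h v, fun hz => hv (by simpa [map_zero] using b.1 (a₁ := v) (a₂ := 0) (by simpa using hz))⟩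

theorem supp_of_bij_tgt {i j : ℝ × ℝ} (h : i ≤ j) (b : Bijective (M.map h))
    (hj : j ∈ Supp M) : i ∈ Supp M := by
  obtain ⟨w, hw⟩ := hj
  obtain ⟨v, rfl⟩ := b.2 w
  exact ⟨v, fun hz => hw (by rw [hz, map_zero])⟩

/-- Sandwich: if `a ≤ b ≤ c`, `a` in the support and the composite map is bijective,
then both factor maps are bijective. -/
theorem bij_sandwich (hthin : ∀ i, Module.rank F (M.V i) ≤ 1) {a b c : ℝ × ℝ}
    (hab : a ≤ b) (hbc : b ≤ c) (ha : a ∈ Supp M)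
    (bac : Bijective (M.map (hab.trans hbc))) :
    Bijective (M.map hab) ∧ Bijective (M.map hbc) := by
  obtain ⟨v, hv⟩ := ha
  have hcv : M.map (hab.trans hbc) v ≠ 0 := fun hz => hv (by
    have := bac.1 (a₁ := v) (a₂ := 0) (by simpa using hz); simpa using this)
  have hu : M.map hab v ≠ 0 := fun hz => hcv (by rw [← mapc hab hbc, hz, map_zero])
  have hbu : M.map hbc (M.map hab v) ≠ 0 := by rw [mapc hab hbc]; exact hcv
  have b2 : Bijective (M.map hbc) := bij_of_ne_zero hthin hbc hu hbu
  exact ⟨bij_left hab hbc bac b2, b2⟩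

end Stmt14
namespace Stmt14
open Function

variable {F : Type} [Field F]

/-- Paths of comparable points whose structure maps are bijective. -/
inductive GPath (M : PersistenceModule F (ℝ × ℝ)) : ℝ × ℝ → ℝ × ℝ → Type where
  | nil (a : ℝ × ℝ) : GPath M a a
  | consUp {a b c : ℝ × ℝ} (h : a ≤ b) (hb : Function.Bijective (M.map h))
      (p : GPath M b c) : GPath M a c
  | consDn {a b c : ℝ × ℝ} (h : b ≤ a) (hb : Function.Bijective (M.map h))
      (p : GPath M b c) : GPath M a c

namespace GPath

variable {M : PersistenceModule F (ℝ × ℝ)}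

def length : ∀ {a b : ℝ × ℝ}, GPath M a b → ℕ
  | _, _, nil _ => 0
  | _, _, consUp _ _ p => p.length + 1
  | _, _, consDn _ _ p => p.length + 1

/-- Transport along a path. -/
noncomputable def T : ∀ {a b : ℝ × ℝ}, GPath M a b → (M.V a ≃ₗ[F] M.V b)
  | _, _, nil _ => LinearEquiv.refl F _
  | _, _, consUp h hb p => (LinearEquiv.ofBijective (M.map h) hb).trans p.T
  | _, _, consDn h hb p => (LinearEquiv.ofBijective (M.map h) hb).symm.trans p.T

@[simp] theorem T_nil {a : ℝ × ℝ} (z : M.V a) : (nil (M := M) a).T z = z := rfl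

@[simp] theorem T_consUp {a b c : ℝ × ℝ} (h : a ≤ b) (hb) (p : GPath M b c) (z : M.V a) :
    (consUp h hb p).T z = p.T (M.map h z) := by
  simp [T, LinearEquiv.trans_apply, LinearEquiv.ofBijective_apply]

@[simp] theorem T_consDn {a b c : ℝ × ℝ} (h : b ≤ a) (hb) (p : GPath M b c) (z : M.V a) :
    (consDn h hb p).T z = p.T ((LinearEquiv.ofBijective (M.map h) hb).symm z) := by
  simp [T, LinearEquiv.trans_apply]

def append : ∀ {a b c : ℝ × ℝ}, GPath M a b → GPath M b c → GPath M a c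
  | _, _, _, nil _, q => q
  | _, _, _, consUp h hb p, q => consUp h hb (p.append q)
  | _, _, _, consDn h hb p, q => consDn h hb (p.append q)

theorem T_append : ∀ {a b c : ℝ × ℝ} (p : GPath M a b) (q : GPath M b c) (z : M.V a),
    (p.append q).T z = q.T (p.T z)
  | _, _, _, nil _, q, z => rfl
  | _, _, _, consUp h hb p, q, z => by simp [append, T_append p q]
  | _, _, _, consDn h hb p, q, z => by simp [append, T_append p q]

def reverse : ∀ {a b : ℝ × ℝ}, GPath M a b → GPath M b a
  | _, _, nil a => nil a
  | _, _, consUp h hb p => p.reverse.append (consDn h hb (nil _))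
  | _, _, consDn h hb p => p.reverse.append (consUp h hb (nil _))

theorem T_reverse : ∀ {a b : ℝ × ℝ} (p : GPath M a b) (z : M.V a),
    p.reverse.T (p.T z) = z
  | _, _, nil _, z => rfl
  | _, _, consUp h hb p, z => by
      simp [reverse, T_append, T_reverse p]
  | _, _, consDn h hb p, z => by
      simp [reverse, T_append, T_reverse p]

theorem supp_src {a b : ℝ × ℝ} (p : GPath M a b) (hb : b ∈ Supp M) : a ∈ Supp M := by
  induction p with
  | nil _ => exact hb
  | consUp h hbij p ih => exact supp_of_bij_tgt h hbij (ih hb)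
  | consDn h hbij p ih => exact supp_of_bij_src h hbij (ih hb)

theorem supp_tgt {a b : ℝ × ℝ} (p : GPath M a b) (ha : a ∈ Supp M) : b ∈ Supp M := by
  induction p with
  | nil _ => exact ha
  | consUp h hbij p ih => exact ih (supp_of_bij_src h hbij ha)
  | consDn h hbij p ih => exact ih (supp_of_bij_tgt h hbij ha)

end GPath

/-- Reachability by a bijective path. -/
def Reach (M : PersistenceModule F (ℝ × ℝ)) (a b : ℝ × ℝ) : Prop := Nonempty (GPath M a b)

variable {M : PersistenceModule F (ℝ × ℝ)}

theorem ofBij_symm_apply {i j : ℝ × ℝ} (h : i ≤ j) (b : Function.Bijective (M.map h))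
    {z : M.V j} {w : M.V i} (hw : M.map h w = z) :
    (LinearEquiv.ofBijective (M.map h) b).symm z = w := by
  rw [LinearEquiv.symm_apply_eq, LinearEquiv.ofBijective_apply, hw]

/-- Incomparability in the plane. -/
theorem incomp_cases {x q : ℝ × ℝ} (h1 : ¬ x ≤ q) (h2 : ¬ q ≤ x) :
    (x.1 < q.1 ∧ q.2 < x.2) ∨ (q.1 < x.1 ∧ x.2 < q.2) := by
  rw [Prod.le_def, not_and_or] at h1 h2
  rcases h1 with h1 | h1 <;> rcases h2 with h2 | h2 <;> push_neg at h1 h2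
  · exact absurd h1.le (not_le_of_gt h2)
  · exact Or.inr ⟨h1, h2⟩
  · exact Or.inl ⟨h2, h1⟩
  · exact absurd h1.le (not_le_of_gt h2)

end Stmt14
namespace Stmt14
open Function

variable {F : Type} [Field F] {M : PersistenceModule F (ℝ × ℝ)}

theorem map_symm {i j : ℝ × ℝ} (h : i ≤ j) (b : Bijective (M.map h)) (z : M.V j) :
    M.map h ((LinearEquiv.ofBijective (M.map h) b).symm z) = z := by
  have := (LinearEquiv.ofBijective (M.map h) b).apply_symm_apply z
  rwa [LinearEquiv.ofBijective_apply] at this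

/-- The inner walking lemma: a path `w ≤ q ⟶ … ⟶ y` whose initial peak is
geometrically incompatible with `x ≤ y` can be shortened (by at least one edge). -/
theorem inner (hthin : ∀ i, Module.rank F (M.V i) ≤ 1) {x y : ℝ × ℝ} (hxy : x ≤ y) :
    ∀ n : ℕ, ∀ {w q : ℝ × ℝ} (hwq : w ≤ q) (bwq : Bijective (M.map hwq))
      (hw : w ∈ Supp M) (S : GPath M q y), S.length ≤ n →
      ((w.2 = q.2 ∧ q.2 < x.2) ∨ (w.1 = q.1 ∧ q.1 < x.1)) →
      ∃ S' : GPath M w y, S'.length ≤ S.length ∧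
        ∀ z, S'.T z = (GPath.consUp hwq bwq S).T z := by
  intro n
  induction n with
  | zero =>
    intro w q hwq bwq hw S hlen hinv
    cases S with
    | nil =>
      exfalso
      rcases hinv with ⟨_, h2⟩ | ⟨_, h2⟩
      · exact absurd hxy.2 (not_le_of_gt h2)
      · exact absurd hxy.1 (not_le_of_gt h2)
    | consUp h hb p => simp [GPath.length] at hlen
    | consDn h hb p => simp [GPath.length] at hlen
  | succ n ih =>
    intro w q hwq bwq hw S hlen hinv
    have hq : q ∈ Supp M := supp_of_bij_src hwq bwq hw
    cases S with
    | nil =>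
      exfalso
      rcases hinv with ⟨_, h2⟩ | ⟨_, h2⟩
      · exact absurd hxy.2 (not_le_of_gt h2)
      · exact absurd hxy.1 (not_le_of_gt h2)
    | consUp hq2 b2 S3 =>
      refine ⟨GPath.consUp (hwq.trans hq2) (bij_trans hwq hq2 bwq b2) S3, by simp [GPath.length], ?_⟩
      intro z
      simp only [GPath.T_consUp]
      rw [mapc hwq hq2]
    | consDn hu bu S2 =>
      rename_i u
      cases S2 with
      | nil =>
        exfalso
        have hxq : x ≤ q := hxy.trans hu
        rcases hinv with ⟨_, h2⟩ | ⟨_, h2⟩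
        · exact absurd hxq.2 (not_le_of_gt h2)
        · exact absurd hxq.1 (not_le_of_gt h2)
      | consDn ht bt S3 =>
        rename_i t
        refine ⟨GPath.consUp hwq bwq (GPath.consDn (ht.trans hu) (bij_trans ht hu bt bu) S3),
          by simp [GPath.length], ?_⟩
        intro z
        simp only [GPath.T_consUp, GPath.T_consDn]
        congr 1
        apply ofBij_symm_apply
        rw [← mapc ht hu, map_symm ht bt, map_symm hu bu]
      | consUp hq' b' S3 =>
        rename_i q'
        have husupp : u ∈ Supp M := supp_of_bij_tgt hu bu hq
        by_cases hqq' : q ≤ q'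
        · -- adjacent peaks comparable: q ≤ q'
          have bqq' : Bijective (M.map hqq') := bij_right hu hqq' bu b'
          refine ⟨GPath.consUp (hwq.trans hqq') (bij_trans hwq hqq' bwq bqq') S3,
            by simp [GPath.length], ?_⟩
          intro z
          simp only [GPath.T_consUp, GPath.T_consDn]
          congr 1
          rw [← mapc hwq hqq']
          conv_lhs => rw [← map_symm hu bu (M.map hwq z)]
          rw [mapc hu hqq']
        · by_cases hq'q : q' ≤ q
          · -- q' ≤ q
            have bq'q : Bijective (M.map hq'q) := bij_right hq' hq'q b' bu
            refine ⟨GPath.consUp hwq bwq (GPath.consDn hq'q bq'q S3),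
              by simp [GPath.length], ?_⟩
            intro z
            simp only [GPath.T_consUp, GPath.T_consDn]
            congr 1
            apply ofBij_symm_apply
            rw [mapc hq' hq'q]
            exact map_symm hu bu _
          · -- q, q' incomparable: raise the valley u to u' := q ⊓ q'
            have hu' : u ≤ q ⊓ q' := le_inf hu hq'
            have hu'q : q ⊓ q' ≤ q := inf_le_left
            have hu'q' : q ⊓ q' ≤ q' := inf_le_right
            obtain ⟨buu', bu'q⟩ := bij_sandwich hthin hu' hu'q husupp bu
            have bu'q' : Bijective (M.map hu'q') := bij_right hu' hu'q' buu' b'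
            have hu'supp : q ⊓ q' ∈ Supp M := supp_of_bij_src hu' buu' husupp
            have L3' : ∀ v : M.V q,
                M.map hu'q' ((LinearEquiv.ofBijective (M.map hu'q) bu'q).symm v)
                  = M.map hq' ((LinearEquiv.ofBijective (M.map hu) bu).symm v) := by
              intro v
              have hb : (LinearEquiv.ofBijective (M.map hu'q) bu'q).symm v
                  = M.map hu' ((LinearEquiv.ofBijective (M.map hu) bu).symm v) := by
                apply ofBij_symm_apply
                rw [mapc hu' hu'q]
                exact map_symm hu bu v
              rw [hb, mapc hu' hu'q']
            have hlen3 : S3.length ≤ n := by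
              simp [GPath.length] at hlen; omega
            rcases incomp_cases hqq' hq'q with ⟨hc1, hc2⟩ | ⟨hc1, hc2⟩
            · -- q' is to the right and below: (q ⊓ q') = (q.1, q'.2)
              have hu'2 : (q ⊓ q').2 = q'.2 := min_eq_right hc2.le
              have hu'1 : (q ⊓ q').1 = q.1 := min_eq_left hc1.le
              rcases hinv with ⟨hwinv, hxinv⟩ | ⟨hwinv, hxinv⟩
              · -- invariant in second coordinates: keep walking right
                obtain ⟨S3', hlen3', hT3⟩ := ih hu'q' bu'q' hu'supp S3 hlen3
                  (Or.inl ⟨hu'2, lt_trans hc2 hxinv⟩)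
                refine ⟨GPath.consUp hwq bwq (GPath.consDn hu'q bu'q S3'), ?_, ?_⟩
                · simp only [GPath.length]; omega
                · intro z
                  simp only [GPath.T_consUp, GPath.T_consDn]
                  rw [hT3]
                  simp only [GPath.T_consUp]
                  rw [L3']
              · -- invariant in first coordinates: reversal; w and q ⊓ q' are comparable
                have hcomp : w.1 = (q ⊓ q').1 := by rw [hu'1, hwinv]
                rcases le_total w.2 (q ⊓ q').2 with h2 | h2
                · have hwu' : w ≤ q ⊓ q' := Prod.le_def.mpr ⟨le_of_eq hcomp, h2⟩
                  have bwu' : Bijective (M.map hwu') := bij_left hwu' hu'q bwq bu'q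
                  refine ⟨GPath.consUp (hwu'.trans hu'q') (bij_trans hwu' hu'q' bwu' bu'q') S3,
                    by simp [GPath.length], ?_⟩
                  intro z
                  simp only [GPath.T_consUp, GPath.T_consDn]
                  rw [← L3' (M.map hwq z)]
                  congr 1
                  have hs : (LinearEquiv.ofBijective (M.map hu'q) bu'q).symm (M.map hwq z)
                      = M.map hwu' z := by
                    apply ofBij_symm_apply
                    rw [mapc hwu' hu'q]
                  rw [hs, mapc hwu' hu'q']
                · have hu'w : q ⊓ q' ≤ w := Prod.le_def.mpr ⟨le_of_eq hcomp.symm, h2⟩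
                  have bu'w : Bijective (M.map hu'w) := bij_left hu'w hwq bu'q bwq
                  refine ⟨GPath.consDn hu'w bu'w (GPath.consUp hu'q' bu'q' S3),
                    by simp [GPath.length], ?_⟩
                  intro z
                  simp only [GPath.T_consUp, GPath.T_consDn]
                  rw [← L3' (M.map hwq z)]
                  have hs : (LinearEquiv.ofBijective (M.map hu'q) bu'q).symm (M.map hwq z)
                      = (LinearEquiv.ofBijective (M.map hu'w) bu'w).symm z := by
                    apply ofBij_symm_apply
                    conv_rhs => rw [← map_symm hu'w bu'w z]
                    rw [mapc hu'w hwq]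
                  rw [hs]
            · -- q' is to the left and above: (q ⊓ q') = (q'.1, q.2)
              have hu'1 : (q ⊓ q').1 = q'.1 := min_eq_right hc1.le
              have hu'2 : (q ⊓ q').2 = q.2 := min_eq_left hc2.le
              rcases hinv with ⟨hwinv, hxinv⟩ | ⟨hwinv, hxinv⟩
              · -- invariant in second coordinates: reversal; w and q ⊓ q' are comparable
                have hcomp : w.2 = (q ⊓ q').2 := by rw [hu'2, hwinv]
                rcases le_total w.1 (q ⊓ q').1 with h1 | h1
                · have hwu' : w ≤ q ⊓ q' := Prod.le_def.mpr ⟨h1, le_of_eq hcomp⟩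
                  have bwu' : Bijective (M.map hwu') := bij_left hwu' hu'q bwq bu'q
                  refine ⟨GPath.consUp (hwu'.trans hu'q') (bij_trans hwu' hu'q' bwu' bu'q') S3,
                    by simp [GPath.length], ?_⟩
                  intro z
                  simp only [GPath.T_consUp, GPath.T_consDn]
                  rw [← L3' (M.map hwq z)]
                  congr 1
                  have hs : (LinearEquiv.ofBijective (M.map hu'q) bu'q).symm (M.map hwq z)
                      = M.map hwu' z := by
                    apply ofBij_symm_apply
                    rw [mapc hwu' hu'q]
                  rw [hs, mapc hwu' hu'q']
                · have hu'w : q ⊓ q' ≤ w := Prod.le_def.mpr ⟨h1, le_of_eq hcomp.symm⟩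
                  have bu'w : Bijective (M.map hu'w) := bij_left hu'w hwq bu'q bwq
                  refine ⟨GPath.consDn hu'w bu'w (GPath.consUp hu'q' bu'q' S3),
                    by simp [GPath.length], ?_⟩
                  intro z
                  simp only [GPath.T_consUp, GPath.T_consDn]
                  rw [← L3' (M.map hwq z)]
                  have hs : (LinearEquiv.ofBijective (M.map hu'q) bu'q).symm (M.map hwq z)
                      = (LinearEquiv.ofBijective (M.map hu'w) bu'w).symm z := by
                    apply ofBij_symm_apply
                    conv_rhs => rw [← map_symm hu'w bu'w z]
                    rw [mapc hu'w hwq]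
                  rw [hs]
              · -- invariant in first coordinates: keep walking left
                obtain ⟨S3', hlen3', hT3⟩ := ih hu'q' bu'q' hu'supp S3 hlen3
                  (Or.inr ⟨hu'1, lt_trans hc1 hxinv⟩)
                refine ⟨GPath.consUp hwq bwq (GPath.consDn hu'q bu'q S3'), ?_, ?_⟩
                · simp only [GPath.length]; omega
                · intro z
                  simp only [GPath.T_consUp, GPath.T_consDn]
                  rw [hT3]
                  simp only [GPath.T_consUp]
                  rw [L3']

end Stmt14
namespace Stmt14
open Function

variable {F : Type} [Field F] {M : PersistenceModule F (ℝ × ℝ)}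

/-- Main transport lemma: along any bijective path between comparable endpoints
(in the support), the transport agrees with the structure map. -/
theorem main_transport (hthin : ∀ i, Module.rank F (M.V i) ≤ 1) :
    ∀ n : ℕ, ∀ {x y : ℝ × ℝ} (p : GPath M x y), p.length ≤ n → x ∈ Supp M →
      ∀ (hxy : x ≤ y) (z : M.V x), p.T z = M.map hxy z := by
  intro n
  induction n with
  | zero =>
    intro x y p hlen hx hxy z
    cases p with
    | nil => exact (mapid hxy z).symm
    | consUp h hb p => simp [GPath.length] at hlen
    | consDn h hb p => simp [GPath.length] at hlen
  | succ n ih =>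
    intro x y p hlen hx hxy z
    cases p with
    | nil => exact (mapid hxy z).symm
    | consDn hvx bvx p' =>
      rename_i v
      have hv : v ∈ Supp M := supp_of_bij_tgt hvx bvx hx
      simp only [GPath.T_consDn]
      rw [ih p' (by simp [GPath.length] at hlen; omega) hv (hvx.trans hxy)]
      conv_rhs => rw [← map_symm hvx bvx z]
      rw [mapc hvx hxy]
    | consUp h₁ b₁ p' =>
      rename_i q
      cases p' with
      | nil =>
        simp only [GPath.T_consUp, GPath.T_nil]
      | consUp h₂ b₂ p'' =>
        have key := ih (GPath.consUp (h₁.trans h₂) (bij_trans h₁ h₂ b₁ b₂) p'')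
          (by simp [GPath.length] at hlen ⊢; omega) hx hxy z
        simp only [GPath.T_consUp] at key ⊢
        rw [← mapc h₁ h₂] at key
        exact key
      | consDn h₂ b₂ p'' =>
        rename_i v
        have hqsupp : q ∈ Supp M := supp_of_bij_src h₁ b₁ hx
        have hvsupp : v ∈ Supp M := supp_of_bij_tgt h₂ b₂ hqsupp
        by_cases hxv : x ≤ v
        · have bxv : Bijective (M.map hxv) := bij_left hxv h₂ b₁ b₂
          have key := ih (GPath.consUp hxv bxv p'')
            (by simp [GPath.length] at hlen ⊢; omega) hx hxy z
          simp only [GPath.T_consUp, GPath.T_consDn] at key ⊢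
          have hs : (LinearEquiv.ofBijective (M.map h₂) b₂).symm (M.map h₁ z)
              = M.map hxv z := by
            apply ofBij_symm_apply
            rw [mapc hxv h₂]
          rw [hs]; exact key
        · by_cases hvx : v ≤ x
          · have bvx : Bijective (M.map hvx) := bij_left hvx h₁ b₂ b₁
            have key := ih (GPath.consDn hvx bvx p'')
              (by simp [GPath.length] at hlen ⊢; omega) hx hxy z
            simp only [GPath.T_consUp, GPath.T_consDn] at key ⊢
            have hs : (LinearEquiv.ofBijective (M.map h₂) b₂).symm (M.map h₁ z)
                = (LinearEquiv.ofBijective (M.map hvx) bvx).symm z := by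
              apply ofBij_symm_apply
              conv_rhs => rw [← map_symm hvx bvx z]
              rw [mapc hvx h₁]
            rw [hs]; exact key
          · cases p'' with
            | nil => exact absurd hxy hxv
            | consDn h₃ b₃ p''' =>
              have key := ih (GPath.consUp h₁ b₁
                  (GPath.consDn (h₃.trans h₂) (bij_trans h₃ h₂ b₃ b₂) p'''))
                (by simp [GPath.length] at hlen ⊢; omega) hx hxy z
              simp only [GPath.T_consUp, GPath.T_consDn] at key ⊢
              have hs : (LinearEquiv.ofBijective (M.map (h₃.trans h₂))
                    (bij_trans h₃ h₂ b₃ b₂)).symm (M.map h₁ z)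
                  = (LinearEquiv.ofBijective (M.map h₃) b₃).symm
                      ((LinearEquiv.ofBijective (M.map h₂) b₂).symm (M.map h₁ z)) := by
                apply ofBij_symm_apply
                rw [← mapc h₃ h₂, map_symm h₃ b₃, map_symm h₂ b₂]
              rw [hs] at key; exact key
            | consUp h₃ b₃ p''' =>
              rename_i q₂
              by_cases hxq₂ : x ≤ q₂
              · -- contract through the join v ⊔ x
                have hvv' : v ≤ v ⊔ x := le_sup_left
                have hxv' : x ≤ v ⊔ x := le_sup_right
                have hv'q : v ⊔ x ≤ q := sup_le h₂ h₁
                have hv'q₂ : v ⊔ x ≤ q₂ := sup_le h₃ hxq₂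
                obtain ⟨bvv', bv'q⟩ := bij_sandwich hthin hvv' hv'q hvsupp b₂
                have bv'q₂ : Bijective (M.map hv'q₂) := bij_right hvv' hv'q₂ bvv' b₃
                have bxv' : Bijective (M.map hxv') := bij_left hxv' hv'q b₁ bv'q
                have bxq₂ : Bijective (M.map (hxv'.trans hv'q₂)) :=
                  bij_trans hxv' hv'q₂ bxv' bv'q₂
                have key := ih (GPath.consUp (hxv'.trans hv'q₂) bxq₂ p''')
                  (by simp [GPath.length] at hlen ⊢; omega) hx hxy z
                simp only [GPath.T_consUp, GPath.T_consDn] at key ⊢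
                have hb := map_symm h₂ b₂ (M.map h₁ z)
                have h5 : M.map hvv' ((LinearEquiv.ofBijective (M.map h₂) b₂).symm (M.map h₁ z))
                    = M.map hxv' z := by
                  apply bv'q.1
                  rw [mapc hvv' hv'q, mapc hxv' hv'q]
                  exact hb
                have e1 : M.map h₃ ((LinearEquiv.ofBijective (M.map h₂) b₂).symm (M.map h₁ z))
                    = M.map hv'q₂ (M.map hvv'
                        ((LinearEquiv.ofBijective (M.map h₂) b₂).symm (M.map h₁ z))) :=
                  (mapc hvv' hv'q₂ _).symm
                rw [e1, h5, mapc hxv' hv'q₂]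
                exact key
              · -- x and q₂ incomparable: call the inner walking lemma
                have hq₂x : ¬ q₂ ≤ x := fun hcon => hvx (h₃.trans hcon)
                have hvv' : v ≤ v ⊔ (x ⊓ q₂) := le_sup_left
                have hv'q : v ⊔ (x ⊓ q₂) ≤ q := sup_le h₂ (inf_le_left.trans h₁)
                have hv'q₂ : v ⊔ (x ⊓ q₂) ≤ q₂ := sup_le h₃ inf_le_right
                have hxqt : x ≤ x ⊔ (v ⊔ (x ⊓ q₂)) := le_sup_left
                have hv'qt : v ⊔ (x ⊓ q₂) ≤ x ⊔ (v ⊔ (x ⊓ q₂)) := le_sup_right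
                have hqtq : x ⊔ (v ⊔ (x ⊓ q₂)) ≤ q := sup_le h₁ hv'q
                obtain ⟨bvv', bv'q⟩ := bij_sandwich hthin hvv' hv'q hvsupp b₂
                have bv'q₂ : Bijective (M.map hv'q₂) := bij_right hvv' hv'q₂ bvv' b₃
                obtain ⟨bxqt, bqtq⟩ := bij_sandwich hthin hxqt hqtq hx b₁
                have bv'qt : Bijective (M.map hv'qt) := bij_left hv'qt hqtq bv'q bqtq
                have hv'supp : v ⊔ (x ⊓ q₂) ∈ Supp M := supp_of_bij_src hvv' bvv' hvsupp
                have hinv : ((v ⊔ (x ⊓ q₂)).2 = q₂.2 ∧ q₂.2 < x.2) ∨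
                    ((v ⊔ (x ⊓ q₂)).1 = q₂.1 ∧ q₂.1 < x.1) := by
                  rcases incomp_cases hxq₂ hq₂x with ⟨hc1, hc2⟩ | ⟨hc1, hc2⟩
                  · left
                    refine ⟨?_, hc2⟩
                    have hm : (x ⊓ q₂).2 = q₂.2 := min_eq_right hc2.le
                    show max v.2 (x ⊓ q₂).2 = q₂.2
                    rw [hm]; exact max_eq_right h₃.2
                  · right
                    refine ⟨?_, hc1⟩
                    have hm : (x ⊓ q₂).1 = q₂.1 := min_eq_right hc1.le
                    show max v.1 (x ⊓ q₂).1 = q₂.1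
                    rw [hm]; exact max_eq_right h₃.1
                obtain ⟨S', hlenS', hTS'⟩ := inner hthin hxy p'''.length hv'q₂ bv'q₂
                  hv'supp p''' le_rfl hinv
                have key := ih (GPath.consUp hxqt bxqt (GPath.consDn hv'qt bv'qt S'))
                  (by simp [GPath.length] at hlen ⊢; omega) hx hxy z
                simp only [GPath.T_consUp, GPath.T_consDn] at key ⊢
                rw [hTS'] at key
                simp only [GPath.T_consUp] at key
                have hb := map_symm h₂ b₂ (M.map h₁ z)
                have hc := map_symm hv'qt bv'qt (M.map hxqt z)
                have h5 : M.map hvv' ((LinearEquiv.ofBijective (M.map h₂) b₂).symm (M.map h₁ z))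
                    = (LinearEquiv.ofBijective (M.map hv'qt) bv'qt).symm (M.map hxqt z) := by
                  apply bv'q.1
                  have hR : M.map hv'q
                      ((LinearEquiv.ofBijective (M.map hv'qt) bv'qt).symm (M.map hxqt z))
                      = M.map h₁ z := by
                    rw [← mapc hv'qt hqtq, hc, mapc hxqt hqtq]
                  rw [mapc hvv' hv'q, hR]
                  exact hb
                have e1 : M.map h₃ ((LinearEquiv.ofBijective (M.map h₂) b₂).symm (M.map h₁ z))
                    = M.map hv'q₂ (M.map hvv'
                        ((LinearEquiv.ofBijective (M.map h₂) b₂).symm (M.map h₁ z))) :=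
                  (mapc hvv' hv'q₂ _).symm
                rw [e1, h5]
                exact key

end Stmt14
namespace Stmt14
open Function

variable {F : Type} [Field F] {M : PersistenceModule F (ℝ × ℝ)}

/-- Indecomposability forces the support to be connected by bijective paths. -/
theorem reach_of_ind (hthin : ∀ i, Module.rank F (M.V i) ≤ 1)
    (hind : ¬ M.Decomposable) {a b : ℝ × ℝ}
    (ha : a ∈ Supp M) (hb : b ∈ Supp M) : Reach M a b := by
  by_contra hnr
  classical
  set C : Set (ℝ × ℝ) := {p | p ∈ Supp M ∧ Reach M a p} with hC
  have haC : a ∈ C := ⟨ha, ⟨GPath.nil a⟩⟩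
  have hbC : b ∉ C := fun hbc => hnr hbc.2
  apply hind
  refine ⟨⟨fun p => if p ∈ C then ⊤ else ⊥, ?_⟩,
    ⟨fun p => if p ∈ C then ⊥ else ⊤, ?_⟩, ⟨a, ?_⟩, ⟨b, ?_⟩, ?_⟩
  · -- stability of A
    intro i j h
    rintro _ ⟨u, hu, rfl⟩
    by_cases hi : i ∈ C
    · rw [if_pos hi] at hu
      by_cases hj : j ∈ C
      · simp [if_pos hj]
      · rw [if_neg hj]
        simp only [Submodule.mem_bot]
        by_contra hne
        have hu0 : u ≠ 0 := fun h0 => hne (by rw [h0, map_zero])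
        have hbij : Bijective (M.map h) := bij_of_ne_zero hthin h hu0 hne
        exact hj ⟨supp_of_bij_src h hbij hi.1,
          hi.2.elim fun P => ⟨P.append (GPath.consUp h hbij (GPath.nil j))⟩⟩
    · rw [if_neg hi] at hu
      have hu0 : u = 0 := by simpa using hu
      simp [hu0]
  · -- stability of B
    intro i j h
    rintro _ ⟨u, hu, rfl⟩
    by_cases hi : i ∈ C
    · rw [if_pos hi] at hu
      have hu0 : u = 0 := by simpa using hu
      simp [hu0]
    · rw [if_neg hi] at hu
      by_cases hj : j ∈ C
      · rw [if_pos hj]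
        simp only [Submodule.mem_bot]
        by_contra hne
        have hu0 : u ≠ 0 := fun h0 => hne (by rw [h0, map_zero])
        have hbij : Bijective (M.map h) := bij_of_ne_zero hthin h hu0 hne
        exact hi ⟨⟨u, hu0⟩,
          hj.2.elim fun P => ⟨P.append (GPath.consDn h hbij (GPath.nil i))⟩⟩
      · simp [if_neg hj]
  · -- A nonzero at a
    dsimp only
    rw [if_pos haC]
    obtain ⟨v, hv⟩ := ha
    intro htop
    have hvb : v ∈ (⊥ : Submodule F (M.V a)) := htop ▸ (Submodule.mem_top : v ∈ ⊤)
    exact hv (by simpa using hvb)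
  · -- B nonzero at b
    dsimp only
    rw [if_neg hbC]
    obtain ⟨v, hv⟩ := hb
    intro htop
    have hvb : v ∈ (⊥ : Submodule F (M.V b)) := htop ▸ (Submodule.mem_top : v ∈ ⊤)
    exact hv (by simpa using hvb)
  · -- complementarity
    intro p
    dsimp only
    by_cases hp : p ∈ C
    · rw [if_pos hp, if_pos hp]; exact isCompl_top_bot
    · rw [if_neg hp, if_neg hp]; exact isCompl_bot_top

/-- All structure maps between comparable support points are bijective. -/
theorem bij_of_mem (hthin : ∀ i, Module.rank F (M.V i) ≤ 1)
    (hind : ¬ M.Decomposable) {i j : ℝ × ℝ} (h : i ≤ j)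
    (hi : i ∈ Supp M) (hj : j ∈ Supp M) : Bijective (M.map h) := by
  obtain ⟨P⟩ := reach_of_ind hthin hind hi hj
  have := main_transport hthin P.length P le_rfl hi h
  have hfun : ⇑(M.map h) = ⇑(P.T) := by funext z; exact (this z).symm
  rw [hfun]
  exact P.T.bijective

/-- The support is convex. -/
theorem supp_convex (hthin : ∀ i, Module.rank F (M.V i) ≤ 1)
    (hind : ¬ M.Decomposable) : PosetConvex (Supp M) := by
  intro i hi k hk j hij hjk
  have hbij : Bijective (M.map (hij.trans hjk)) := bij_of_mem hthin hind _ hi hk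
  obtain ⟨v, hv⟩ := hi
  refine ⟨M.map hij v, fun h0 => hv ?_⟩
  have : M.map (hij.trans hjk) v = 0 := by rw [← mapc hij hjk, h0, map_zero]
  have h1 := hbij.1 (a₁ := v) (a₂ := 0) (by simpa using this)
  simpa using h1

theorem zig_of_path : ∀ {a b : ℝ × ℝ} (P : GPath M a b) (ha : a ∈ Supp M)
    (hb : b ∈ Supp M), Nonempty (Zigzag (↥(Supp M)) ⟨a, ha⟩ ⟨b, hb⟩)
  | _, _, GPath.nil a, _, _ => ⟨Zigzag.single _⟩
  | _, _, GPath.consUp h hbij p, ha, hb =>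
    (zig_of_path p (supp_of_bij_src h hbij ha) hb).elim fun Z =>
      ⟨Zigzag.consLe (show _ ≤ _ from h) Z⟩
  | _, _, GPath.consDn h hbij p, ha, hb =>
    (zig_of_path p (supp_of_bij_tgt h hbij ha) hb).elim fun Z =>
      ⟨Zigzag.consGe (show _ ≤ _ from h) Z⟩

/-- The support is zigzag-connected. -/
theorem supp_connected (hthin : ∀ i, Module.rank F (M.V i) ≤ 1)
    (hind : ¬ M.Decomposable) : ZigzagConnected (Supp M) := by
  intro a b
  obtain ⟨P⟩ := reach_of_ind hthin hind a.2 b.2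
  exact zig_of_path P a.2 b.2

/-- Transport does not depend on the path. -/
theorem T_indep (hthin : ∀ i, Module.rank F (M.V i) ≤ 1) {u w : ℝ × ℝ}
    (hu : u ∈ Supp M) (P P' : GPath M u w) (z : M.V u) : P.T z = P'.T z := by
  have h1 : (P.append P'.reverse).T z = z := by
    have := main_transport hthin _ (P.append P'.reverse) le_rfl hu le_rfl z
    rwa [mapid] at this
  rw [GPath.T_append] at h1
  have h2 : P'.reverse.T (P'.T z) = z := GPath.T_reverse P' z
  exact P'.reverse.T.injective (by rw [h1, h2])

end Stmt14
namespace Stmt14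
open Function

variable {F : Type} [Field F]

/-- The zero equivalence between subsingleton modules. -/
noncomputable def zeroEquiv (A B : Type) [AddCommGroup A] [Module F A]
    [AddCommGroup B] [Module F B] (hA : Subsingleton A) (hB : Subsingleton B) :
    A ≃ₗ[F] B where
  toFun _ := 0
  map_add' x y := (zero_add 0).symm
  map_smul' c x := (smul_zero c).symm
  invFun _ := 0
  left_inv x := hA.elim 0 x
  right_inv x := hB.elim 0 x

open Classical in
theorem subsingleton_NV {I : Set (ℝ × ℝ)} {hconv : PosetConvex I} {p : ℝ × ℝ}
    (hp : p ∉ I) : Subsingleton ((intervalModule F I hconv).V p) := by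
  show Subsingleton ↥(if p ∈ I then (⊤ : Submodule F F) else ⊥)
  rw [if_neg hp]
  exact ⟨fun a b => Subtype.ext (by
    rw [(Submodule.mem_bot F).mp a.2, (Submodule.mem_bot F).mp b.2])⟩

open Classical in
theorem NV_map_val {I : Set (ℝ × ℝ)} {hconv : PosetConvex I} {i j : ℝ × ℝ} (h : i ≤ j)
    (hi : i ∈ I) (hj : j ∈ I) (z : (intervalModule F I hconv).V i) :
    ((((intervalModule F I hconv).map h) z).1 : F) = (z.1 : F) := by
  have hrw : (intervalModule F I hconv).map h
      = (if hij : i ∈ I ∧ j ∈ I then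
          Submodule.inclusion (by simp [hij.1, hij.2]) else 0) := rfl
  rw [hrw, dif_pos (⟨hi, hj⟩ : i ∈ I ∧ j ∈ I)]
  rfl

end Stmt14

open Stmt14

/-- Every indecomposable thin persistence module on `(ℝ,≤)²` is
isomorphic to a polytope module, i.e. to the interval module `F𝕀` on some interval
(connected convex subset) `𝕀` of `(ℝ,≤)²`. -/
theorem statement14 (F : Type) [Field F] (M : PersistenceModule F (ℝ × ℝ))
    (hthin : ∀ i, Module.rank F (M.V i) ≤ 1)
    (hind : ¬ M.Decomposable) :
    ∃ (I : Set (ℝ × ℝ)) (hconv : PosetConvex I), ZigzagConnected I ∧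
      IsIsomorphic M (intervalModule F I hconv) := by
  classical
  refine ⟨Supp M, supp_convex hthin hind, supp_connected hthin hind, ?_⟩
  rcases Set.eq_empty_or_nonempty (Supp M) with hemp | ⟨p₀, hp₀⟩
  · -- empty support: everything is zero
    have hnot : ∀ p : ℝ × ℝ, p ∉ Supp M := fun p hp => by
      rw [hemp] at hp; exact Set.notMem_empty p hp
    refine ⟨fun p => zeroEquiv _ _ (subsingleton_of_not_supp (hnot p))
      (subsingleton_NV (hnot p)), ?_⟩
    intro i j h
    apply LinearMap.ext
    intro v
    haveI := subsingleton_NV (F := F) (hconv := supp_convex hthin hind) (hnot j)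
    exact Subsingleton.elim _ _
  · -- nonempty support: construct a coherent gauge
    have hp₀' : p₀ ∈ Supp M := hp₀
    obtain ⟨e₀, he₀⟩ := hp₀
    have hpath : ∀ p, p ∈ Supp M → Nonempty (GPath M p₀ p) :=
      fun p hp => reach_of_ind hthin hind hp₀' hp
    set e : ∀ p : ℝ × ℝ, M.V p :=
      fun p => if hp : p ∈ Supp M then ((hpath p hp).some.T e₀) else 0 with hedef
    have he : ∀ p, p ∈ Supp M → e p ≠ 0 := by
      intro p hp
      rw [hedef]; dsimp only; rw [dif_pos hp]
      exact (LinearEquiv.map_ne_zero_iff _).mpr he₀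
    have hgauge : ∀ {i j : ℝ × ℝ} (h : i ≤ j), i ∈ Supp M → j ∈ Supp M →
        M.map h (e i) = e j := by
      intro i j h hi hj
      have hbij := bij_of_mem hthin hind h hi hj
      rw [hedef]; dsimp only; rw [dif_pos hi, dif_pos hj]
      have hind2 := T_indep hthin hp₀'
        ((hpath i hi).some.append (GPath.consUp h hbij (GPath.nil j)))
        ((hpath j hj).some) e₀
      rw [GPath.T_append] at hind2
      simp only [GPath.T_consUp, GPath.T_nil] at hind2
      exact hind2
    have lineBij : ∀ p, ∀ hp : p ∈ Supp M,
        Function.Bijective (LinearMap.toSpanSingleton F (M.V p) (e p)) := by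
      intro p hp
      constructor
      · intro c c' hcc
        simp only [LinearMap.toSpanSingleton_apply] at hcc
        by_contra hne
        have hz : (c - c') • e p = 0 := by rw [sub_smul, hcc, sub_self]
        rcases smul_eq_zero.mp hz with h0 | h0
        · exact hne (sub_eq_zero.mp h0)
        · exact he p hp h0
      · intro w
        obtain ⟨c, hc⟩ := span_of_thin hthin (he p hp) w
        exact ⟨c, by rw [LinearMap.toSpanSingleton_apply, ← hc]⟩
    refine ⟨fun p => if hp : p ∈ Supp M then
        ((LinearEquiv.ofBijective (LinearMap.toSpanSingleton F (M.V p) (e p))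
            (lineBij p hp)).symm.trans
          ((Submodule.topEquiv (R := F) (M := F)).symm.trans
            (LinearEquiv.ofEq ⊤ _ (if_pos hp).symm)))
      else zeroEquiv _ _ (subsingleton_of_not_supp hp) (subsingleton_NV hp), ?_⟩
    intro i j h
    apply LinearMap.ext
    intro v
    simp only [LinearMap.comp_apply, LinearEquiv.coe_coe]
    by_cases hi : i ∈ Supp M
    · by_cases hj : j ∈ Supp M
      · rw [dif_pos hi, dif_pos hj]
        apply Subtype.ext
        rw [NV_map_val h hi hj]
        show ((LinearEquiv.ofBijective (LinearMap.toSpanSingleton F (M.V i) (e i))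
            (lineBij i hi)).symm v : F)
          = ((LinearEquiv.ofBijective (LinearMap.toSpanSingleton F (M.V j) (e j))
            (lineBij j hj)).symm ((M.map h) v) : F)
        rw [eq_comm, LinearEquiv.symm_apply_eq, LinearEquiv.ofBijective_apply,
          LinearMap.toSpanSingleton_apply]
        have hv : (LinearMap.toSpanSingleton F (M.V i) (e i))
            ((LinearEquiv.ofBijective _ (lineBij i hi)).symm v) = v := by
          have happ := (LinearEquiv.ofBijective _ (lineBij i hi)).apply_symm_apply v
          rwa [LinearEquiv.ofBijective_apply] at happ
        conv_lhs => rw [← hv]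
        rw [LinearMap.toSpanSingleton_apply, map_smul, hgauge h hi hj]
      · rw [dif_pos hi]
        haveI := subsingleton_NV (F := F) (hconv := supp_convex hthin hind) hj
        exact Subsingleton.elim _ _
    · haveI := subsingleton_of_not_supp hi
      have hv0 : v = 0 := Subsingleton.elim v 0
      simp only [hv0, map_zero]
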